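/- Let G be a graph on vertex set {1,...,n} and suppose u_1,...,u_n, r are vectors whose Gram matrix equals A(cone(G)) + 2I, with r corresponding to the cone vertex. For U ⊆ {1,...,n}, define v_i = u_i if i ∈ U and v_i = r - u_i otherwise. Then the Gram matrix of v_1,...,v_n equals A(G^U) + 2I, where G^U is the switching of G with respect to U. -/

import Mathlib

open Matrix

/-- The adjacency matrix of the cone over a graph whose adjacency matrix is `M`;
the added cone vertex (adjacent to all other vertices) is `none`. -/
def coneMatrix {n : ℕ} (M : Matrix (Fin n) (Fin n) ℝ) :
    Matrix (Option (Fin n)) (Option (Fin n)) ℝ :=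
  Matrix.of fun i j =>
    match i, j with
    | some a, some b => M a b
    | some _, none => 1
    | none, some _ => 1
    | none, none => 0

/-- The switching `G^U` of a graph `G` with respect to a vertex subset `U`:
adjacency is preserved within `U` and within its complement, and complemented
between `U` and its complement. -/
def switchGraph {V : Type*} (G : SimpleGraph V) (U : Finset V) : SimpleGraph V where
  Adj x y := x ≠ y ∧
    (((x ∈ U ↔ y ∈ U) ∧ G.Adj x y) ∨ ((¬ (x ∈ U ↔ y ∈ U)) ∧ ¬ G.Adj x y))
  symm := ⟨by
    rintro x y ⟨hne, h | h⟩
    · exact ⟨hne.symm, Or.inl ⟨h.1.symm, h.2.symm⟩⟩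
    · exact ⟨hne.symm, Or.inr ⟨fun hc => h.1 hc.symm, fun hc => h.2 hc.symm⟩⟩⟩
  loopless := ⟨fun x h => h.1 rfl⟩

instance {V : Type*} [DecidableEq V] (G : SimpleGraph V) [DecidableRel G.Adj]
    (U : Finset V) : DecidableRel (switchGraph G U).Adj := fun x y =>
  inferInstanceAs (Decidable (x ≠ y ∧
    (((x ∈ U ↔ y ∈ U) ∧ G.Adj x y) ∨ ((¬ (x ∈ U ↔ y ∈ U)) ∧ ¬ G.Adj x y))))


/-- Let `G` be a graph on `{1,…,n}` and `u_1,…,u_n, r` vectors whose Gram matrix is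
`A(cone G) + 2I`, with `r` the cone vertex. For `U ⊆ {1,…,n}`, set `v_i = u_i` for
`i ∈ U` and `v_i = r - u_i` otherwise. Then the Gram matrix of `v_1,…,v_n` is
`A(G^U) + 2I`. -/
theorem stmt17 (d n : ℕ) (G : SimpleGraph (Fin n)) [DecidableRel G.Adj]
    (u : Fin n → (Fin d → ℝ)) (r : Fin d → ℝ)
    (hgram : ∀ i j : Option (Fin n),
      (Option.elim i r u) ⬝ᵥ (Option.elim j r u) =
        (coneMatrix (G.adjMatrix ℝ) + (2 : ℝ) • 1) i j)
    (U : Finset (Fin n)) (v : Fin n → (Fin d → ℝ))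
    (hv : ∀ i, v i = if i ∈ U then u i else r - u i) :
    ∀ i j : Fin n, v i ⬝ᵥ v j =
      ((switchGraph G U).adjMatrix ℝ + (2 : ℝ) • 1) i j := by
  intro i j
  have huu := hgram (some i) (some j)
  have hur := hgram (some i) none
  have hru := hgram none (some j)
  have hrr := hgram none none
  simp only [coneMatrix, Matrix.add_apply, Matrix.smul_apply, Matrix.one_apply,
    Option.elim, Matrix.of_apply, SimpleGraph.adjMatrix_apply] at huu hur hru hrr
  norm_num at hur hru hrr
  rw [hv i, hv j]
  simp only [Matrix.add_apply, Matrix.smul_apply, Matrix.one_apply,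
    SimpleGraph.adjMatrix_apply]
  simp only [switchGraph, ne_eq]
  by_cases hij : i = j
  · subst hij
    by_cases hiU : i ∈ U <;>
      simp only [hiU, if_true, if_false, dotProduct_sub, sub_dotProduct, huu, hur, hru, hrr] <;>
      simp <;> ring
  · by_cases hiU : i ∈ U <;> by_cases hjU : j ∈ U <;> by_cases hadj : G.Adj i j <;>
      simp only [hiU, hjU, hadj, hij, if_true, if_false, dotProduct_sub, sub_dotProduct,
        huu, hur, hru, hrr] <;>
      simp [hij, hiU, hjU, hadj] <;> ring
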